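/- (Diederich–Fornaess Levi form identity) Let r, ψ be C² real functions near a point p of ℂ^n with r(p) < 0, and let ρ = -(-r e^{-Aψ})^η for constants A > 0 and 0 < η < 1. Then for every vector v, L^{J_st}_ρ(p; v) = η(-r)^{η-2} e^{-ηAψ} D(v), where D(v) = A r² [L_ψ(p;v) - ηA|∂ψ(p)(v)|²] + (-r)[L_r(p;v) - 2ηA Re(∂r(p)(v) · conj(∂ψ(p)(v)))] + (1-η)|∂r(p)(v)|². -/

import Mathlib

/-- The standard Levi form (complex Hessian) of a real function `u` on `ℂ^n` at `p` in direction
`v`: `L_u(p;v) = Σ u_{z_j z̄_k}(p) v_j v̄_k = (1/4)(D²u(p)(v,v) + D²u(p)(iv,iv))`. -/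
noncomputable def LeviStd {n : ℕ} (u : (Fin n → ℂ) → ℝ) (p v : Fin n → ℂ) : ℝ :=
  (4 : ℝ)⁻¹ * (fderiv ℝ (fun q => fderiv ℝ u q v) p v
    + fderiv ℝ (fun q => fderiv ℝ u q (Complex.I • v)) p (Complex.I • v))

/-- The complex differential `∂u(p)(v) = Σ u_{z_j}(p) v_j = (1/2)(du(p)(v) - i du(p)(iv))`. -/
noncomputable def delStd {n : ℕ} (u : (Fin n → ℂ) → ℝ) (p v : Fin n → ℂ) : ℂ :=
  (2 : ℂ)⁻¹ * ((fderiv ℝ u p v : ℝ) - Complex.I * (fderiv ℝ u p (Complex.I • v) : ℝ))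

/- STATEMENT 13 (Diederich–Fornaess Levi form identity): for `r, ψ` C² near `p` with `r < 0` near
`p`, `A > 0`, `0 < η < 1`, and `ρ = -(-r e^{-Aψ})^η`, one has for every `v`:
`L_ρ(p;v) = η (-r)^{η-2} e^{-ηAψ} D(v)` with
`D(v) = A r² [L_ψ(p;v) - ηA|∂ψ(p)v|²] + (-r)[L_r(p;v) - 2ηA Re(∂r(p)v ⬝ conj ∂ψ(p)v)]
        + (1-η)|∂r(p)v|²`. -/

open Filter Topology

lemma key13 {n : ℕ} (r ψ : (Fin n → ℂ) → ℝ) (p : Fin n → ℂ)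
    (hr : ContDiffAt ℝ 2 r p) (hψ : ContDiffAt ℝ 2 ψ p)
    (hneg : ∀ᶠ q in nhds p, r q < 0)
    (A η : ℝ) (w : Fin n → ℂ) :
    fderiv ℝ (fun q => fderiv ℝ (fun q' => -((-(r q')) * Real.exp (-(A * ψ q'))) ^ η) q w) p w
      = η * (-(r p)) ^ (η - 2) * Real.exp (-(η * A * ψ p))
        * (A * (r p) ^ 2 * (fderiv ℝ (fun q => fderiv ℝ ψ q w) p w
              - η * A * (fderiv ℝ ψ p w) ^ 2)
          + (-(r p)) * (fderiv ℝ (fun q => fderiv ℝ r q w) p w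
              - 2 * η * A * (fderiv ℝ r p w * fderiv ℝ ψ p w))
          + (1 - η) * (fderiv ℝ r p w) ^ 2) := by
  have hp0 : r p < 0 := hneg.self_of_nhds
  -- Step 1: identify the first directional derivative near p
  have hev : (fun q => fderiv ℝ (fun q' => -((-(r q')) * Real.exp (-(A * ψ q'))) ^ η) q w)
      =ᶠ[nhds p] (fun q => -(η * ((-(r q)) * Real.exp (-(A * ψ q))) ^ (η - 1)
          * (Real.exp (-(A * ψ q)) * (A * r q * fderiv ℝ ψ q w - fderiv ℝ r q w)))) := by
    filter_upwards [hneg, hr.eventually (by norm_num), hψ.eventually (by norm_num)]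
      with q hq hrq hψq
    have hdr : HasFDerivAt r (fderiv ℝ r q) q :=
      (hrq.differentiableAt (by norm_num)).hasFDerivAt
    have hdψ : HasFDerivAt ψ (fderiv ℝ ψ q) q :=
      (hψq.differentiableAt (by norm_num)).hasFDerivAt
    have hX : HasFDerivAt (fun q' => Real.exp (-(A * ψ q')))
        (Real.exp (-(A * ψ q)) • (-(A • fderiv ℝ ψ q))) q := ((hdψ.const_mul A).neg).exp
    have hg := hdr.neg.mul hX
    have hgq : (-(r q)) * Real.exp (-(A * ψ q)) ≠ 0 :=
      ne_of_gt (mul_pos (by linarith) (Real.exp_pos _))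
    have hρ : HasFDerivAt (fun q' => -((-(r q')) * Real.exp (-(A * ψ q'))) ^ η) _ q :=
      (hg.rpow_const (Or.inl hgq)).neg
    rw [hρ.fderiv]
    simp only [ContinuousLinearMap.neg_apply, ContinuousLinearMap.smul_apply,
      ContinuousLinearMap.add_apply, smul_eq_mul, Pi.mul_apply, Pi.neg_apply]
    ring
  rw [hev.fderiv_eq]
  -- Step 2: differentiability data at p
  have hdrp : HasFDerivAt r (fderiv ℝ r p) p :=
    (hr.differentiableAt (by norm_num)).hasFDerivAt
  have hdψp : HasFDerivAt ψ (fderiv ℝ ψ p) p :=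
    (hψ.differentiableAt (by norm_num)).hasFDerivAt
  have hu1 : DifferentiableAt ℝ (fun q => fderiv ℝ r q w) p :=
    (((hr.fderiv_right (m := 1) (by norm_num)).differentiableAt one_ne_zero)).clm_apply
      (differentiableAt_const w)
  have hu2 : DifferentiableAt ℝ (fun q => fderiv ℝ ψ q w) p :=
    (((hψ.fderiv_right (m := 1) (by norm_num)).differentiableAt one_ne_zero)).clm_apply
      (differentiableAt_const w)
  have hu1' := hu1.hasFDerivAt
  have hu2' := hu2.hasFDerivAt
  have hXp : HasFDerivAt (fun q' => Real.exp (-(A * ψ q')))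
      (Real.exp (-(A * ψ p)) • (-(A • fderiv ℝ ψ p))) p := ((hdψp.const_mul A).neg).exp
  have hgp := hdrp.neg.mul hXp
  have hgppos : 0 < (-(r p)) * Real.exp (-(A * ψ p)) :=
    mul_pos (by linarith) (Real.exp_pos _)
  have hgpow := hgp.rpow_const (p := η - 1) (Or.inl (ne_of_gt hgppos))
  have hN : HasFDerivAt (fun q => A * r q * fderiv ℝ ψ q w - fderiv ℝ r q w) _ p :=
    ((hdrp.const_mul A).mul hu2').sub hu1'
  have hXN := hXp.mul hN
  have hG : HasFDerivAt (fun q => -(η * ((-(r q)) * Real.exp (-(A * ψ q))) ^ (η - 1)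
      * (Real.exp (-(A * ψ q)) * (A * r q * fderiv ℝ ψ q w - fderiv ℝ r q w)))) _ p :=
    ((hgpow.const_mul η).mul hXN).neg
  rw [hG.fderiv]
  simp only [ContinuousLinearMap.neg_apply, ContinuousLinearMap.smul_apply,
    ContinuousLinearMap.add_apply, ContinuousLinearMap.sub_apply, smul_eq_mul, Pi.mul_apply, Pi.neg_apply]
  -- Step 3: algebra with rpow
  have hna : (0:ℝ) < -(r p) := by linarith
  have hxpos : (0:ℝ) < Real.exp (-(A * ψ p)) := Real.exp_pos _
  have h21 : (η - 1 - 1 : ℝ) = η - 2 := by ring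
  rw [h21]
  have hsplit2 : ((-(r p)) * Real.exp (-(A * ψ p))) ^ (η - 2)
      = (-(r p)) ^ (η - 2) * Real.exp (-(A * ψ p)) ^ (η - 2) :=
    Real.mul_rpow hna.le hxpos.le
  have hsplit1 : ((-(r p)) * Real.exp (-(A * ψ p))) ^ (η - 1)
      = ((-(r p)) ^ (η - 2) * (-(r p))) * (Real.exp (-(A * ψ p)) ^ (η - 2) * Real.exp (-(A * ψ p))) := by
    rw [Real.mul_rpow hna.le hxpos.le]
    rw [show (η - 1 : ℝ) = (η - 2) + 1 by ring, Real.rpow_add hna, Real.rpow_add hxpos,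
      Real.rpow_one, Real.rpow_one]
  have hE : Real.exp (-(η * A * ψ p))
      = Real.exp (-(A * ψ p)) ^ (η - 2) * Real.exp (-(A * ψ p)) * Real.exp (-(A * ψ p)) := by
    rw [← Real.exp_mul, ← Real.exp_add, ← Real.exp_add]
    congr 1
    ring
  rw [hsplit1, hsplit2, hE]
  ring

theorem stmt13 {n : ℕ} (r ψ : (Fin n → ℂ) → ℝ) (p : Fin n → ℂ)
    (hr : ContDiffAt ℝ 2 r p) (hψ : ContDiffAt ℝ 2 ψ p)
    (hneg : ∀ᶠ q in nhds p, r q < 0)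
    (A η : ℝ) (hA : 0 < A) (hη : 0 < η) (hη1 : η < 1) (v : Fin n → ℂ) :
    LeviStd (fun q => -((-(r q)) * Real.exp (-(A * ψ q))) ^ η) p v
      = η * (-(r p)) ^ (η - 2) * Real.exp (-(η * A * ψ p))
        * (A * (r p) ^ 2 * (LeviStd ψ p v - η * A * ‖delStd ψ p v‖ ^ 2)
          + (-(r p)) * (LeviStd r p v
              - 2 * η * A * (delStd r p v * (starRingEnd ℂ) (delStd ψ p v)).re)
          + (1 - η) * ‖delStd r p v‖ ^ 2) := by
  have k1 := key13 r ψ p hr hψ hneg A η v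
  have k2 := key13 r ψ p hr hψ hneg A η (Complex.I • v)
  have habs : ∀ x y : ℝ, ‖(2:ℂ)⁻¹ * ((x:ℂ) - Complex.I * (y:ℂ))‖ ^ 2
      = (x^2 + y^2)/4 := by
    intro x y
    rw [Complex.sq_norm]
    simp [Complex.normSq_apply, Complex.mul_re, Complex.mul_im, Complex.sub_re, Complex.sub_im]
    ring
  have hre : ∀ x1 y1 x2 y2 : ℝ,
      ((2:ℂ)⁻¹ * ((x1:ℂ) - Complex.I * (y1:ℂ))
        * (starRingEnd ℂ) ((2:ℂ)⁻¹ * ((x2:ℂ) - Complex.I * (y2:ℂ)))).re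
      = (x1*x2 + y1*y2)/4 := by
    intro x1 y1 x2 y2
    simp [Complex.mul_re, Complex.mul_im, Complex.sub_re, Complex.sub_im]
    ring
  simp only [LeviStd, delStd]
  rw [k1, k2, habs, habs, hre]
  ring
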